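/- Let d ≥ 3 and let I = (L(u,v)) be a lexsegment ideal with x_1 | u, ν_1(u) = 1, x_1 ∤ v, and v ≤_lex x_2·u/x_1. If x_2^{d-1}x_n ≥_lex v, then for every k ≥ 2, the monomial m = x_2^d·u^{k-1}/x_1 satisfies m ∉ I^k and x_i·m ∈ I^k for all 1 ≤ i ≤ n; hence depth(S/I^k) = 0. -/

import Mathlib

open MvPolynomial

noncomputable section

namespace LexPaper

/-- total degree of an exponent vector -/
def deg {sigma : Type*} (a : sigma  →₀  ℕ) : ℕ := a.sum fun _ e => e

/-- the monomial x^a as an element of the polynomial ring -/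
def mon (k : Type*) [Field k] {sigma : Type*} (a : sigma  →₀  ℕ) : MvPolynomial sigma k :=
  MvPolynomial.monomial a 1

/-- `lexLe a b` : a ≤_lex b, where x_1 > x_2 > ... > x_n (index 0 is the largest variable). -/
def lexLe {n : ℕ} (a b : Fin n  →₀  ℕ) : Prop := toLex a ≤ toLex b

/-- `lexLt a b` : a <_lex b. -/
def lexLt {n : ℕ} (a b : Fin n  →₀  ℕ) : Prop := toLex a < toLex b

/-- the lexsegment set L(u,v) : all exponent vectors of degree d between v and u in lex order -/
def lexSeg {n : ℕ} (d : ℕ) (u v : Fin n  →₀  ℕ) : Set (Fin n  →₀  ℕ) :=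
  {m | deg m = d  ∧  lexLe v m  ∧  lexLe m u}

/-- the lexsegment ideal (L(u,v)) -/
def lexIdeal (k : Type*) [Field k] {n : ℕ} (d : ℕ) (u v : Fin n  →₀  ℕ) :
    Ideal (MvPolynomial (Fin n) k) :=
  Ideal.span (mon k '' lexSeg d u v)

/-- the maximal graded ideal (x_1, ..., x_n) -/
def mMax (k : Type*) [Field k] (n : ℕ) : Ideal (MvPolynomial (Fin n) k) :=
  Ideal.span (Set.range (X : Fin n -> MvPolynomial (Fin n) k))

/-- depth of S/I: the supremum of lengths of regular sequences on S/I consisting of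
elements of the maximal graded ideal -/
def quotDepth (k : Type*) [Field k] {n : ℕ} (I : Ideal (MvPolynomial (Fin n) k)) : ℕ :=
  sSup {r : ℕ | ∃ rs : List (MvPolynomial (Fin n) k), rs.length = r  ∧ 
    (∀ x ∈ rs, x ∈ mMax k n)  ∧  RingTheory.Sequence.IsRegular (MvPolynomial (Fin n) k ⧸ I) rs}


-- helper lemmas
lemma deg_add {sigma : Type*} (a b : sigma →₀ ℕ) : deg (a + b) = deg a + deg b :=
  Finsupp.sum_add_index' (fun _ => rfl) (fun _ _ _ => rfl)

lemma deg_single {sigma : Type*} (i : sigma) (m : ℕ) : deg (Finsupp.single i m) = m :=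
  Finsupp.sum_single_index rfl

lemma deg_nsmul {sigma : Type*} (c : ℕ) (a : sigma →₀ ℕ) : deg (c • a) = c * deg a := by
  induction c with
  | zero => simp [deg]
  | succ c ih => rw [succ_nsmul, deg_add, ih]; ring

lemma mon_mul {k : Type*} [Field k] {sigma : Type*} (a b : sigma →₀ ℕ) :
    mon k a * mon k b = mon k (a + b) := by
  simp [mon, monomial_mul]

lemma mon_pow {k : Type*} [Field k] {sigma : Type*} (a : sigma →₀ ℕ) (c : ℕ) :
    mon k a ^ c = mon k (c • a) := by
  simp [mon, monomial_pow]

lemma lex_lt_aux {n : ℕ} {a b : Fin n →₀ ℕ} (i : Fin n) (h1 : ∀ j, j < i → a j = b j)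
    (h2 : a i < b i) : toLex a < toLex b :=
  Finsupp.Lex.lt_iff.mpr ⟨i, h1, h2⟩

/-- the ideal of polynomials all of whose terms have degree ≥ N -/
def degGE (k : Type*) [Field k] (n N : ℕ) : Ideal (MvPolynomial (Fin n) k) where
  carrier := {p | ∀ a : Fin n →₀ ℕ, deg a < N → MvPolynomial.coeff a p = 0}
  add_mem' := fun hp hq a ha => by rw [coeff_add, hp a ha, hq a ha, add_zero]
  zero_mem' := fun a _ => coeff_zero a
  smul_mem' := fun c p hp a ha => by
    rw [smul_eq_mul, coeff_mul]
    refine Finset.sum_eq_zero fun x hx => ?_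
    have hxa : x.1 + x.2 = a := Finset.HasAntidiagonal.mem_antidiagonal.mp hx
    have : deg x.2 ≤ deg a := by rw [← hxa, deg_add]; omega
    rw [hp x.2 (by omega), mul_zero]

lemma mem_degGE {k : Type*} [Field k] {n N : ℕ} {p : MvPolynomial (Fin n) k} :
    p ∈ degGE k n N ↔ ∀ a : Fin n →₀ ℕ, deg a < N → MvPolynomial.coeff a p = 0 :=
  Iff.rfl

lemma degGE_mul {k : Type*} [Field k] {n A B : ℕ} :
    degGE k n A * degGE k n B ≤ degGE k n (A + B) := by
  rw [Ideal.mul_le]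
  intro p hp q hq a ha
  rw [coeff_mul]
  refine Finset.sum_eq_zero fun x hx => ?_
  have hxa : x.1 + x.2 = a := Finset.HasAntidiagonal.mem_antidiagonal.mp hx
  have hsum : deg x.1 + deg x.2 = deg a := by rw [← hxa, deg_add]
  by_cases h1 : deg x.1 < A
  · rw [hp x.1 h1, zero_mul]
  · rw [hq x.2 (by omega), mul_zero]

lemma lexIdeal_le_degGE {k : Type*} [Field k] {n d : ℕ} (u v : Fin n →₀ ℕ) :
    lexIdeal k d u v ≤ degGE k n d := by
  rw [lexIdeal, Ideal.span_le]
  rintro _ ⟨a, ⟨hda, -, -⟩, rfl⟩ b hb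
  rw [mon, coeff_monomial, if_neg]
  rintro rfl
  omega

lemma pow_le_degGE {k : Type*} [Field k] {n d : ℕ} (u v : Fin n →₀ ℕ) (t : ℕ) :
    (lexIdeal k d u v) ^ t ≤ degGE k n (t * d) := by
  induction t with
  | zero =>
    rw [pow_zero]
    intro p _ a ha
    exact absurd ha (by omega)
  | succ t ih =>
    rw [pow_succ]
    refine le_trans (Ideal.mul_mono ih (lexIdeal_le_degGE u v)) ?_
    rw [Nat.succ_mul]
    exact degGE_mul





theorem main_aux {k : Type*} [Field k] {n d : ℕ} (hn : 2 ≤ n) (hd : 3 ≤ d)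
    (u v : Fin n →₀ ℕ) (hu : deg u = d) (hv : deg v = d) (huv : lexLe v u)
    (i0 i1 iN : Fin n) (h0 : (i0 : ℕ) = 0) (h1 : (i1 : ℕ) = 1) (hN : (iN : ℕ) = n - 1)
    (hnu1 : u i0 = 1) (hx1v : v i0 = 0)
    (hvle : lexLe v (u + Finsupp.single i1 1 - Finsupp.single i0 1))
    (hvle2 : lexLe v (Finsupp.single i1 (d-1) + Finsupp.single iN 1))
    (s : ℕ) :
    mon k (Finsupp.single i1 d + (s+1) • u - Finsupp.single i0 1) ∉ (lexIdeal k d u v) ^ (s+2) ∧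
    (∀ i : Fin n, X i * mon k (Finsupp.single i1 d + (s+1) • u - Finsupp.single i0 1)
      ∈ (lexIdeal k d u v) ^ (s+2)) := by
  have hne10 : i1 ≠ i0 := Fin.ne_of_val_ne (by omega)
  have hle : Finsupp.single i0 1 ≤ Finsupp.single i1 d + (s+1) • u := by
    rw [Finsupp.single_le_iff, Finsupp.add_apply, Finsupp.smul_apply,
      Finsupp.single_eq_of_ne' hne10, hnu1]
    simp
  -- generator : u
  have hUmem : mon k u ∈ lexIdeal k d u v :=
    Ideal.subset_span ⟨u, ⟨hu, huv, le_refl _⟩, rfl⟩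
  -- generator : x2^d
  have hP1 : lexLe (Finsupp.single i1 d) u := by
    apply le_of_lt
    apply lex_lt_aux i0
    · intro j hj
      have := Fin.lt_def.mp hj
      exact absurd this (by omega)
    · rw [Finsupp.single_eq_of_ne' hne10, hnu1]; omega
  have hP2 : lexLe (Finsupp.single i1 (d-1) + Finsupp.single iN 1) (Finsupp.single i1 d) := by
    by_cases hN1 : iN = i1
    · exact le_of_eq (by rw [hN1, ← Finsupp.single_add, show d-1+1 = d by omega])
    · have hNval : (iN : ℕ) ≠ 1 := fun h => hN1 (Fin.ext (by omega))
      apply le_of_lt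
      apply lex_lt_aux i1
      · intro j hj
        have hjv := Fin.lt_def.mp hj
        have hji1 : i1 ≠ j := Fin.ne_of_val_ne (by omega)
        have hjiN : iN ≠ j := Fin.ne_of_val_ne (by omega)
        simp [Finsupp.add_apply, Finsupp.single_eq_of_ne' hji1, Finsupp.single_eq_of_ne' hjiN]
      · simp [Finsupp.add_apply, Finsupp.single_eq_same, Finsupp.single_eq_of_ne' hN1]
        omega
  have hSmem : mon k (Finsupp.single i1 d) ∈ lexIdeal k d u v :=
    Ideal.subset_span ⟨_, ⟨deg_single i1 d, le_trans hvle2 hP2, hP1⟩, rfl⟩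
  -- generator : x2 u / x1
  have hule : Finsupp.single i0 1 ≤ u := Finsupp.single_le_iff.mpr (by rw [hnu1])
  have hBeq : u + Finsupp.single i1 1 - Finsupp.single i0 1
      = (u - Finsupp.single i0 1) + Finsupp.single i1 1 := by
    ext j
    rcases eq_or_ne i0 j with rfl | hj
    · simp [Finsupp.add_apply, Finsupp.tsub_apply, Finsupp.single_eq_of_ne' hne10, hnu1]
    · simp [Finsupp.add_apply, Finsupp.tsub_apply, Finsupp.single_eq_of_ne' hj]
  have hdegw : deg (u - Finsupp.single i0 1) + 1 = d := by
    have := congrArg deg (tsub_add_cancel_of_le hule)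
    rw [deg_add, deg_single, hu] at this
    exact this
  have hBmem : mon k ((u - Finsupp.single i0 1) + Finsupp.single i1 1) ∈ lexIdeal k d u v := by
    refine Ideal.subset_span ⟨_, ⟨?_, ?_, ?_⟩, rfl⟩
    · rw [deg_add, deg_single]; omega
    · rw [← hBeq]; exact hvle
    · apply le_of_lt
      apply lex_lt_aux i0
      · intro j hj
        have := Fin.lt_def.mp hj
        exact absurd this (by omega)
      · rw [Finsupp.add_apply, Finsupp.tsub_apply, Finsupp.single_eq_same,
          Finsupp.single_eq_of_ne' hne10, hnu1]
        omega
  constructor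
  · -- part 1 : not a member, by degree reasons
    intro hmem
    have h2 := pow_le_degGE u v (s+2) hmem
    have hde : deg (Finsupp.single i1 d + (s+1) • u - Finsupp.single i0 1) + 1 = (s+2)*d := by
      have := congrArg deg (tsub_add_cancel_of_le hle)
      rw [deg_add, deg_add, deg_single, deg_single, deg_nsmul, hu] at this
      rw [this]; ring
    have h3 := h2 _ (by rw [← hde]; exact Nat.lt_succ_self _)
    rw [mon, coeff_monomial, if_pos rfl] at h3
    exact one_ne_zero h3
  · -- part 2 : x_i * m ∈ I^(s+2)
    intro i
    by_cases hii : i = i0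
    · subst hii
      have heq1 : mon k (Finsupp.single i1 d + (s+1) • u)
          = mon k (Finsupp.single i1 d) * mon k u ^ (s+1) := by
        rw [mon_pow, mon_mul]
      rw [show (X i : MvPolynomial (Fin n) k) = mon k (Finsupp.single i 1) from rfl,
        mon_mul, add_tsub_cancel_of_le hle, heq1]
      have : mon k (Finsupp.single i1 d) * mon k u ^ (s+1)
          ∈ lexIdeal k d u v * (lexIdeal k d u v) ^ (s+1) :=
        Ideal.mul_mem_mul hSmem (Ideal.pow_mem_pow hUmem _)
      rw [← pow_succ'] at this
      exact this
    · have hival : 1 ≤ (i : ℕ) := by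
        rcases Nat.eq_zero_or_pos (i : ℕ) with h | h
        · exact absurd (Fin.ext (by omega) : i = i0) hii
        · exact h
      have hii0 : i ≠ i0 := hii
      -- generator : x2^{d-1} x_i
      have hAmem : mon k (Finsupp.single i1 (d-1) + Finsupp.single i 1) ∈ lexIdeal k d u v := by
        refine Ideal.subset_span ⟨_, ⟨?_, ?_, ?_⟩, rfl⟩
        · rw [deg_add, deg_single, deg_single]; omega
        · refine le_trans hvle2 ?_
          by_cases hiN : i = iN
          · rw [hiN]
          · have hiNv : (i : ℕ) < n - 1 := by
              have h2 : (i : ℕ) ≤ n - 1 := by omega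
              have h3 : (i : ℕ) ≠ n - 1 := fun h => hiN (Fin.ext (by omega))
              omega
            apply le_of_lt
            apply lex_lt_aux i
            · intro j hj
              have hjv := Fin.lt_def.mp hj
              have hjiN : iN ≠ j := Fin.ne_of_val_ne (by omega)
              have hji : i ≠ j := Fin.ne_of_val_ne (by omega)
              rw [Finsupp.add_apply, Finsupp.add_apply, Finsupp.single_eq_of_ne' hjiN,
                Finsupp.single_eq_of_ne' hji]
            · have hiNne : iN ≠ i := Fin.ne_of_val_ne (by omega)
              rw [Finsupp.add_apply, Finsupp.add_apply, Finsupp.single_eq_of_ne' hiNne,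
                Finsupp.single_eq_same]
              omega
        · apply le_of_lt
          apply lex_lt_aux i0
          · intro j hj
            have := Fin.lt_def.mp hj
            exact absurd this (by omega)
          · have hine : i ≠ i0 := hii
            rw [Finsupp.add_apply, Finsupp.single_eq_of_ne' hne10, Finsupp.single_eq_of_ne' hine,
              hnu1]
            omega
      have hkey : Finsupp.single i 1 + (Finsupp.single i1 d + (s+1) • u - Finsupp.single i0 1)
          = (Finsupp.single i1 (d-1) + Finsupp.single i 1)
            + (((u - Finsupp.single i0 1) + Finsupp.single i1 1) + s • u) := by
        ext j
        rcases eq_or_ne i0 j with rfl | hj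
        · simp [Finsupp.add_apply, Finsupp.tsub_apply, Finsupp.smul_apply, smul_eq_mul,
            Finsupp.single_eq_of_ne' hne10, Finsupp.single_eq_of_ne' hii0, hnu1,
            Finsupp.single_eq_same]
        · simp only [Finsupp.add_apply, Finsupp.tsub_apply, Finsupp.smul_apply, smul_eq_mul,
            Finsupp.single_apply, Finsupp.single_eq_of_ne' hj]
          split_ifs <;> simp_all [Nat.succ_mul] <;> omega
      have heq2 : mon k ((Finsupp.single i1 (d-1) + Finsupp.single i 1)
            + (((u - Finsupp.single i0 1) + Finsupp.single i1 1) + s • u))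
          = mon k (Finsupp.single i1 (d-1) + Finsupp.single i 1)
            * (mon k ((u - Finsupp.single i0 1) + Finsupp.single i1 1) * mon k u ^ s) := by
        rw [mon_pow, mon_mul, mon_mul]
      rw [show (X i : MvPolynomial (Fin n) k) = mon k (Finsupp.single i 1) from rfl,
        mon_mul, hkey, heq2]
      have : mon k (Finsupp.single i1 (d-1) + Finsupp.single i 1)
          * (mon k ((u - Finsupp.single i0 1) + Finsupp.single i1 1) * mon k u ^ s)
          ∈ lexIdeal k d u v * (lexIdeal k d u v * (lexIdeal k d u v) ^ s) :=
        Ideal.mul_mem_mul hAmem (Ideal.mul_mem_mul hBmem (Ideal.pow_mem_pow hUmem s))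
      rw [← pow_succ', ← pow_succ'] at this
      exact this



lemma depth_zero_of {k : Type*} [Field k] {n : ℕ} {I : Ideal (MvPolynomial (Fin n) k)}
    (m : MvPolynomial (Fin n) k) (hm : m ∉ I) (hxm : ∀ i : Fin n, X i * m ∈ I) :
    quotDepth k I = 0 := by
  have hsub : {r : ℕ | ∃ rs : List (MvPolynomial (Fin n) k), rs.length = r  ∧
      (∀ x ∈ rs, x ∈ mMax k n)  ∧
      RingTheory.Sequence.IsRegular (MvPolynomial (Fin n) k ⧸ I) rs} ⊆ {0} := by
    rintro r ⟨rs, rfl, hmemM, hreg⟩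
    cases rs with
    | nil => simp
    | cons x L =>
      exfalso
      have hx : x ∈ mMax k n := hmemM x (List.mem_cons_self)
      have hw := hreg.toIsWeaklyRegular
      rw [RingTheory.Sequence.isWeaklyRegular_cons_iff] at hw
      have hsr := hw.1
      have hxm' : x * m ∈ I := by
        have hcol : mMax k n ≤ I.colon (Ideal.span {m}) := by
          rw [mMax, Ideal.span_le]
          rintro _ ⟨i, rfl⟩
          exact Ideal.mem_colon_span_singleton.mpr (hxm i)
        exact Ideal.mem_colon_span_singleton.mp (hcol hx)
      apply hm
      have h0 : x • (Submodule.Quotient.mk m : MvPolynomial (Fin n) k ⧸ I) = x • (0 : MvPolynomial (Fin n) k ⧸ I) := by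
        rw [smul_zero, ← Submodule.Quotient.mk_smul, smul_eq_mul]
        exact (Submodule.Quotient.mk_eq_zero _).mpr hxm'
      have := hsr h0
      exact (Submodule.Quotient.mk_eq_zero _).mp this
  rcases Set.subset_singleton_iff_eq.mp hsub with h | h
  · unfold quotDepth; rw [h]; exact csSup_empty
  · unfold quotDepth; rw [h]; exact csSup_singleton 0



theorem statement11 {k : Type*} [Field k] {n d : ℕ} (hn : 2 ≤ n) (hd : 3 ≤ d)
    (u v : Fin n →₀ ℕ) (hu : deg u = d) (hv : deg v = d) (huv : lexLe v u)
    (hnu1 : u (⟨0, by omega⟩ : Fin n) = 1) (hx1v : v (⟨0, by omega⟩ : Fin n) = 0)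
    (hvle : lexLe v (u + Finsupp.single (⟨1, by omega⟩ : Fin n) 1 - Finsupp.single (⟨0, by omega⟩ : Fin n) 1))
    (hvle2 : lexLe v (Finsupp.single (⟨1, by omega⟩ : Fin n) (d-1) + Finsupp.single (⟨n-1, by omega⟩ : Fin n) 1))
    (t : ℕ) (ht : 2 ≤ t) :
    mon k (Finsupp.single (⟨1, by omega⟩ : Fin n) d + (t-1) • u - Finsupp.single (⟨0, by omega⟩ : Fin n) 1) ∉ (lexIdeal k d u v) ^ t ∧
    (∀ i : Fin n, X i * mon k (Finsupp.single (⟨1, by omega⟩ : Fin n) d + (t-1) • u - Finsupp.single (⟨0, by omega⟩ : Fin n) 1)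
        ∈ (lexIdeal k d u v) ^ t) ∧
    quotDepth k ((lexIdeal k d u v) ^ t) = 0 := by
  obtain ⟨s, rfl⟩ : ∃ s, t = s + 2 := ⟨t - 2, by omega⟩
  obtain ⟨hnm, hmem⟩ := main_aux (k := k) hn hd u v hu hv huv
    ⟨0, by omega⟩ ⟨1, by omega⟩ ⟨n-1, by omega⟩ rfl rfl rfl hnu1 hx1v hvle hvle2 s
  exact ⟨hnm, hmem, depth_zero_of _ hnm hmem⟩


end LexPaper
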